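/- arXiv:2005.04776 — 3 statements merged into one kernel-verified Lean document; each statement's English description precedes it below -/
import Mathlib

section
/- Let T_0 = {(γ, υ) ∈ Iw⁺_{GL_g} × M_g(pℤ_p) : ᵀγ Ĵ_g υ = ᵀυ Ĵ_g γ}. Then the map (γ, υ) ↦ the 2g×2g block matrix ((γ, 0), (υ, Ĵ_g ᵀγ⁻¹ Ĵ_g)) sends T_0 into GSp_{2g}(ℤ_p), and the image matrix has similitude factor 1. -/
open Matrix

/-- The `g × g` anti-diagonal matrix of ones `Ĵ_g`. -/
def antiDiagOne (g : ℕ) (R : Type*) [CommRing R] : Matrix (Fin g) (Fin g) R :=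
  Matrix.of fun i j => if (i : ℕ) + (j : ℕ) + 1 = g then 1 else 0

/-- The standard symplectic matrix `J = ((0, -Ĵ_g), (Ĵ_g, 0))`. -/
def Jmat (g : ℕ) (R : Type*) [CommRing R] :
    Matrix (Fin g ⊕ Fin g) (Fin g ⊕ Fin g) R :=
  Matrix.fromBlocks 0 (-(antiDiagOne g R)) (antiDiagOne g R) 0

/-- Membership in the strict Iwahori subgroup `Iw⁺_{GL_g}` of `GL_g(ℤ_p)`:
invertible matrices congruent to a diagonal matrix mod `p`. -/
def MemIwPlusGL (p g : ℕ) [Fact p.Prime] (γ : Matrix (Fin g) (Fin g) (PadicInt p)) : Prop :=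
  IsUnit γ.det ∧ ∀ i j : Fin g, i ≠ j → (p : PadicInt p) ∣ γ i j

/-- Membership in `T_0`: pairs `(γ, υ)` with `γ ∈ Iw⁺_{GL_g}`,
`υ ∈ M_g(pℤ_p)` and `ᵀγ Ĵ_g υ = ᵀυ Ĵ_g γ`. -/
def MemT0 (p g : ℕ) [Fact p.Prime] (γ υ : Matrix (Fin g) (Fin g) (PadicInt p)) : Prop :=
  MemIwPlusGL p g γ ∧ (∀ i j : Fin g, (p : PadicInt p) ∣ υ i j) ∧
    γᵀ * antiDiagOne g (PadicInt p) * υ = υᵀ * antiDiagOne g (PadicInt p) * γ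

lemma antiDiagOne_transpose (g : ℕ) (R : Type*) [CommRing R] :
    (antiDiagOne g R)ᵀ = antiDiagOne g R := by
  ext i j
  simp only [antiDiagOne, transpose_apply, of_apply]
  congr 1
  simp only [eq_iff_iff]
  omega

lemma antiDiagOne_mul_self (g : ℕ) (R : Type*) [CommRing R] :
    antiDiagOne g R * antiDiagOne g R = 1 := by
  ext i j
  simp only [antiDiagOne, mul_apply, of_apply, one_apply, ite_mul, one_mul, zero_mul]
  have key : ∀ k : Fin g, (i : ℕ) + (k : ℕ) + 1 = g ↔ k = i.rev := by
    intro k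
    rw [Fin.ext_iff, Fin.val_rev]
    omega
  rw [Finset.sum_congr rfl (fun k _ => by rw [if_congr (key k) rfl rfl]),
    Finset.sum_ite_eq' (Finset.univ) i.rev (fun k => if (k : ℕ) + (j : ℕ) + 1 = g then (1:R) else 0)]
  simp only [Finset.mem_univ, if_true, Fin.val_rev]
  have : (g - ((i:ℕ) + 1)) + (j:ℕ) + 1 = g ↔ i = j := by
    rw [Fin.ext_iff]; omega
  rw [if_congr this rfl rfl]

/-- The map `(γ, υ) ↦ ((γ, 0), (υ, Ĵ_g ᵀγ⁻¹ Ĵ_g))` sends `T_0` into `GSp_{2g}(ℤ_p)`,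
and the image matrix has similitude factor `1`. -/
theorem T0_map_mem_GSp (p g : ℕ) [Fact p.Prime]
    (γ υ : Matrix (Fin g) (Fin g) (PadicInt p)) (h : MemT0 p g γ υ) :
    IsUnit (Matrix.fromBlocks γ 0 υ
        (antiDiagOne g (PadicInt p) * (γ⁻¹)ᵀ * antiDiagOne g (PadicInt p))).det ∧
    (Matrix.fromBlocks γ 0 υ
        (antiDiagOne g (PadicInt p) * (γ⁻¹)ᵀ * antiDiagOne g (PadicInt p)))ᵀ *
      Jmat g (PadicInt p) *
      Matrix.fromBlocks γ 0 υ
        (antiDiagOne g (PadicInt p) * (γ⁻¹)ᵀ * antiDiagOne g (PadicInt p))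
      = ((1 : (PadicInt p)ˣ) : PadicInt p) • Jmat g (PadicInt p) := by
  obtain ⟨⟨hdet, -⟩, -, hsym⟩ := h
  let R := PadicInt p
  set Jg := antiDiagOne g R with hJg
  have hJJ : Jg * Jg = 1 := antiDiagOne_mul_self g R
  have hJT : Jgᵀ = Jg := antiDiagOne_transpose g R
  have hJdet : IsUnit Jg.det := IsUnit.of_mul_eq_one _ (by rw [← det_mul, hJJ, det_one])
  have hγi : γ * γ⁻¹ = 1 := mul_nonsing_inv _ hdet
  have hγi' : γ⁻¹ * γ = 1 := nonsing_inv_mul _ hdet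
  set δ := Jg * (γ⁻¹)ᵀ * Jg with hδ
  constructor
  · rw [det_fromBlocks_zero₁₂]
    refine hdet.mul ?_
    rw [hδ, det_mul, det_mul, det_transpose]
    exact (hJdet.mul (isUnit_nonsing_inv_det γ hdet)).mul hJdet
  · have hB : γᵀ * Jg * δ = Jg := by
      rw [hδ, show γᵀ * Jg * (Jg * (γ⁻¹)ᵀ * Jg) = γᵀ * (Jg * Jg) * (γ⁻¹)ᵀ * Jg by noncomm_ring,
        hJJ, mul_one, ← transpose_mul, hγi', transpose_one, one_mul]
    have hC : δᵀ * Jg * γ = Jg := by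
      rw [hδ, transpose_mul, transpose_mul, hJT, transpose_transpose,
        show Jg * (γ⁻¹ * Jg) * Jg * γ = Jg * γ⁻¹ * (Jg * Jg) * γ from by noncomm_ring,
        hJJ, mul_one, mul_assoc, hγi', mul_one]
    rw [Units.val_one, one_smul, Jmat, fromBlocks_transpose, fromBlocks_multiply,
      fromBlocks_multiply]
    simp only [Matrix.mul_zero, Matrix.zero_mul, add_zero, zero_add, Matrix.mul_neg,
      Matrix.neg_mul, transpose_zero]
    rw [← hJg, hsym, add_neg_cancel, hB, hC]
    simp
end

section
/- Let Ξ = {((α_a, α_b), (α_c, α_d)) ∈ GSp_{2g}(ℚ_p) : α_a ∈ Iw⁺_{GL_g}, α_b ∈ M_g(ℤ_p), α_c ∈ M_g(pℤ_p), α_d ∈ M_g(ℤ_p)}. Then for α ∈ Ξ and (γ, υ) ∈ T_0, the pair (α_a γ + α_b υ, α_c γ + α_d υ) again lies in T_0, and this defines a left action of the monoid Ξ on T_0. -/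
open Matrix

/-- A `ℚ_p`-matrix has entries in `ℤ_p`. -/
def IntMat {p g : ℕ} [Fact p.Prime] (a : Matrix (Fin g) (Fin g) ℚ_[p]) : Prop :=
  ∀ i j : Fin g, ‖a i j‖ ≤ 1

/-- A `ℚ_p`-matrix has entries in `pℤ_p`. -/
def PIntMat {p g : ℕ} [Fact p.Prime] (a : Matrix (Fin g) (Fin g) ℚ_[p]) : Prop :=
  ∀ i j : Fin g, ‖a i j‖ ≤ ‖(p : ℚ_[p])‖

/-- Membership in the strict Iwahori subgroup `Iw⁺_{GL_g} ⊂ GL_g(ℤ_p)`, viewed inside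
`M_g(ℚ_p)`: integral entries, off-diagonal entries divisible by `p`, unit determinant. -/
def MemIwPlusGLQ {p g : ℕ} [Fact p.Prime] (a : Matrix (Fin g) (Fin g) ℚ_[p]) : Prop :=
  IntMat a ∧ ‖a.det‖ = 1 ∧ ∀ i j : Fin g, i ≠ j → ‖a i j‖ ≤ ‖(p : ℚ_[p])‖

/-- Membership in `T_0`, viewed inside `M_g(ℚ_p) × M_g(ℚ_p)`. -/
def MemT0Q {p g : ℕ} [Fact p.Prime] (γ υ : Matrix (Fin g) (Fin g) ℚ_[p]) : Prop :=
  MemIwPlusGLQ γ ∧ PIntMat υ ∧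
    γᵀ * antiDiagOne g ℚ_[p] * υ = υᵀ * antiDiagOne g ℚ_[p] * γ

/-- Membership in the monoid `Ξ = ((Iw⁺_{GL_g}, M_g(ℤ_p)), (M_g(pℤ_p), M_g(ℤ_p))) ∩ GSp_{2g}(ℚ_p)`,
in terms of the four `g × g` blocks. -/
def MemXi {p g : ℕ} [Fact p.Prime] (a b c d : Matrix (Fin g) (Fin g) ℚ_[p]) : Prop :=
  MemIwPlusGLQ a ∧ IntMat b ∧ PIntMat c ∧ IntMat d ∧
    (∃ ς : ℚ_[p]ˣ, (Matrix.fromBlocks a b c d)ᵀ * Jmat g ℚ_[p] * Matrix.fromBlocks a b c d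
      = (ς : ℚ_[p]) • Jmat g ℚ_[p])

section Helpers

variable {p g : ℕ} [Fact p.Prime]

lemma mulEntry_le {A B : Matrix (Fin g) (Fin g) ℚ_[p]} {s t : ℝ} (hs : 0 ≤ s) (ht : 0 ≤ t)
    (hA : ∀ i j, ‖A i j‖ ≤ s) (hB : ∀ i j, ‖B i j‖ ≤ t) (i j : Fin g) :
    ‖(A * B) i j‖ ≤ s * t := by
  rw [Matrix.mul_apply]
  refine IsUltrametricDist.norm_sum_le_of_forall_le_of_nonneg (mul_nonneg hs ht) ?_
  intro k _
  rw [norm_mul]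
  exact mul_le_mul (hA i k) (hB k j) (norm_nonneg _) hs

lemma mulOffDiag_le {A B : Matrix (Fin g) (Fin g) ℚ_[p]}
    (hA : IntMat A) (hAo : ∀ i j : Fin g, i ≠ j → ‖A i j‖ ≤ ‖(p : ℚ_[p])‖)
    (hB : IntMat B) (hBo : ∀ i j : Fin g, i ≠ j → ‖B i j‖ ≤ ‖(p : ℚ_[p])‖)
    {i j : Fin g} (hij : i ≠ j) : ‖(A * B) i j‖ ≤ ‖(p : ℚ_[p])‖ := by
  rw [Matrix.mul_apply]
  refine IsUltrametricDist.norm_sum_le_of_forall_le_of_nonneg (norm_nonneg _) ?_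
  intro k _
  rw [norm_mul]
  rcases eq_or_ne k i with h | hk
  · calc ‖A i k‖ * ‖B k j‖ ≤ 1 * ‖(p : ℚ_[p])‖ :=
        mul_le_mul (hA i k) (hBo k j (by rw [h]; exact hij)) (norm_nonneg _) one_pos.le
      _ = ‖(p : ℚ_[p])‖ := one_mul _
  · calc ‖A i k‖ * ‖B k j‖ ≤ ‖(p : ℚ_[p])‖ * 1 :=
        mul_le_mul (hAo i k (Ne.symm hk)) (hB k j) (norm_nonneg _) (norm_nonneg _)
      _ = ‖(p : ℚ_[p])‖ := mul_one _

lemma norm_prod_sub_prod {ι : Type*} (s : Finset ι) (f h : ι → ℚ_[p]) {ε : ℝ} (hε : 0 ≤ ε)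
    (hf : ∀ i ∈ s, ‖f i‖ ≤ 1) (hh : ∀ i ∈ s, ‖h i‖ ≤ 1) (hd : ∀ i ∈ s, ‖f i - h i‖ ≤ ε) :
    ‖∏ i ∈ s, f i - ∏ i ∈ s, h i‖ ≤ ε := by
  classical
  induction s using Finset.induction_on with
  | empty => simpa using hε
  | @insert a s ha ih =>
    rw [Finset.prod_insert ha, Finset.prod_insert ha]
    have key : f a * ∏ i ∈ s, f i - h a * ∏ i ∈ s, h i
        = f a * (∏ i ∈ s, f i - ∏ i ∈ s, h i) + (f a - h a) * ∏ i ∈ s, h i := by ring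
    rw [key]
    refine le_trans (Padic.nonarchimedean _ _) (max_le ?_ ?_)
    · rw [norm_mul]
      calc ‖f a‖ * ‖∏ i ∈ s, f i - ∏ i ∈ s, h i‖ ≤ 1 * ε := by
            refine mul_le_mul (hf a (Finset.mem_insert_self a s)) ?_ (norm_nonneg _) one_pos.le
            exact ih (fun i hi => hf i (Finset.mem_insert_of_mem hi))
              (fun i hi => hh i (Finset.mem_insert_of_mem hi))
              (fun i hi => hd i (Finset.mem_insert_of_mem hi))
        _ = ε := one_mul _
    · rw [norm_mul]
      calc ‖f a - h a‖ * ‖∏ i ∈ s, h i‖ ≤ ε * 1 := by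
            refine mul_le_mul (hd a (Finset.mem_insert_self a s)) ?_ (norm_nonneg _) hε
            rw [norm_prod]
            exact Finset.prod_le_one (fun _ _ => norm_nonneg _)
              (fun i hi => hh i (Finset.mem_insert_of_mem hi))
        _ = ε := mul_one _

lemma norm_det_sub_det {X Y : Matrix (Fin g) (Fin g) ℚ_[p]} (hX : IntMat X) (hY : IntMat Y)
    (h : ∀ i j, ‖X i j - Y i j‖ ≤ ‖(p : ℚ_[p])‖) :
    ‖X.det - Y.det‖ ≤ ‖(p : ℚ_[p])‖ := by
  rw [Matrix.det_apply', Matrix.det_apply', ← Finset.sum_sub_distrib]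
  refine IsUltrametricDist.norm_sum_le_of_forall_le_of_nonneg (norm_nonneg _) ?_
  intro σ _
  rw [← mul_sub, norm_mul]
  have h2 : ‖∏ i, X (σ i) i - ∏ i, Y (σ i) i‖ ≤ ‖(p : ℚ_[p])‖ :=
    norm_prod_sub_prod _ _ _ (norm_nonneg _) (fun i _ => hX _ _) (fun i _ => hY _ _)
      (fun i _ => h _ _)
  calc ‖((Equiv.Perm.sign σ : ℤ) : ℚ_[p])‖ * ‖∏ i, X (σ i) i - ∏ i, Y (σ i) i‖
      ≤ 1 * ‖(p : ℚ_[p])‖ :=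
        mul_le_mul (Padic.norm_int_le_one _) h2 (norm_nonneg _) one_pos.le
    _ = ‖(p : ℚ_[p])‖ := one_mul _

end Helpers

/-- For `α ∈ Ξ` and `(γ, υ) ∈ T_0`, the pair `(α_a γ + α_b υ, α_c γ + α_d υ)` again lies
in `T_0`, and this defines a left action of the monoid `Ξ` on `T_0` (compatibility with
the block multiplication of `Ξ`). -/
theorem Xi_left_action (p g : ℕ) [Fact p.Prime]
    (a b c d γ υ : Matrix (Fin g) (Fin g) ℚ_[p])
    (hα : MemXi a b c d) (hx : MemT0Q γ υ) :
    MemT0Q (a * γ + b * υ) (c * γ + d * υ) ∧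
    ∀ a' b' c' d' : Matrix (Fin g) (Fin g) ℚ_[p], MemXi a' b' c' d' →
      ((a * a' + b * c') * γ + (a * b' + b * d') * υ
          = a * (a' * γ + b' * υ) + b * (c' * γ + d' * υ) ∧
       (c * a' + d * c') * γ + (c * b' + d * d') * υ
          = c * (a' * γ + b' * υ) + d * (c' * γ + d' * υ)) := by
  obtain ⟨⟨haI, haD, haO⟩, hbI, hcP, hdI, ς, hJ⟩ := hα
  obtain ⟨⟨hγI, hγD, hγO⟩, hυP, hsym⟩ := hx
  have hp1 : ‖(p : ℚ_[p])‖ ≤ 1 := le_of_lt Padic.norm_p_lt_one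
  have hp0 : (0:ℝ) ≤ ‖(p : ℚ_[p])‖ := norm_nonneg _
  set E : Matrix (Fin g) (Fin g) ℚ_[p] := antiDiagOne g ℚ_[p] with hE
  -- integrality of the new first component
  have hIntaγ : IntMat (a * γ) := fun i j => by
    simpa using mulEntry_le one_pos.le one_pos.le haI hγI i j
  have hIntNew : IntMat (a * γ + b * υ) := by
    intro i j
    rw [Matrix.add_apply]
    refine le_trans (Padic.nonarchimedean _ _) (max_le (hIntaγ i j) ?_)
    calc ‖(b * υ) i j‖ ≤ 1 * ‖(p : ℚ_[p])‖ := mulEntry_le one_pos.le hp0 hbI hυP i j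
      _ ≤ 1 := by rw [one_mul]; exact hp1
  -- the second component has entries in pℤ_p
  have hPNew : PIntMat (c * γ + d * υ) := by
    intro i j
    rw [Matrix.add_apply]
    refine le_trans (Padic.nonarchimedean _ _) (max_le ?_ ?_)
    · calc ‖(c * γ) i j‖ ≤ ‖(p : ℚ_[p])‖ * 1 := mulEntry_le hp0 one_pos.le hcP hγI i j
        _ = ‖(p : ℚ_[p])‖ := mul_one _
    · calc ‖(d * υ) i j‖ ≤ 1 * ‖(p : ℚ_[p])‖ := mulEntry_le one_pos.le hp0 hdI hυP i j
        _ = ‖(p : ℚ_[p])‖ := one_mul _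
  -- determinant
  have hdet : ‖(a * γ + b * υ).det‖ = 1 := by
    have hdaγ : ‖(a * γ).det‖ = 1 := by
      rw [Matrix.det_mul, norm_mul, haD, hγD, one_mul]
    have hdiff : ∀ i j, ‖(a * γ + b * υ) i j - (a * γ) i j‖ ≤ ‖(p : ℚ_[p])‖ := by
      intro i j
      rw [Matrix.add_apply, add_sub_cancel_left]
      calc ‖(b * υ) i j‖ ≤ 1 * ‖(p : ℚ_[p])‖ := mulEntry_le one_pos.le hp0 hbI hυP i j
        _ = ‖(p : ℚ_[p])‖ := one_mul _
    have hnd := norm_det_sub_det hIntNew hIntaγ hdiff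
    have hlt : ‖(a * γ + b * υ).det - (a * γ).det‖ < 1 :=
      lt_of_le_of_lt hnd Padic.norm_p_lt_one
    have hrw : (a * γ + b * υ).det = (a * γ).det + ((a * γ + b * υ).det - (a * γ).det) := by
      ring
    have hne : ‖(a * γ).det‖ ≠ ‖(a * γ + b * υ).det - (a * γ).det‖ := by
      rw [hdaγ]; exact (ne_of_lt hlt).symm
    rw [hrw, Padic.add_eq_max_of_ne hne, hdaγ, max_eq_left (le_of_lt hlt)]
  -- off-diagonal divisibility
  have hOffNew : ∀ i j : Fin g, i ≠ j → ‖(a * γ + b * υ) i j‖ ≤ ‖(p : ℚ_[p])‖ := by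
    intro i j hij
    rw [Matrix.add_apply]
    refine le_trans (Padic.nonarchimedean _ _)
      (max_le (mulOffDiag_le haI haO hγI hγO hij) ?_)
    calc ‖(b * υ) i j‖ ≤ 1 * ‖(p : ℚ_[p])‖ := mulEntry_le one_pos.le hp0 hbI hυP i j
      _ = ‖(p : ℚ_[p])‖ := one_mul _
  -- extract block identities from the symplectic relation
  have lhs_eq : (Matrix.fromBlocks a b c d)ᵀ * Jmat g ℚ_[p] * Matrix.fromBlocks a b c d
      = Matrix.fromBlocks (cᵀ * E * a - aᵀ * E * c) (cᵀ * E * b - aᵀ * E * d)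
          (dᵀ * E * a - bᵀ * E * c) (dᵀ * E * b - bᵀ * E * d) := by
    simp [Jmat, hE, Matrix.fromBlocks_transpose, Matrix.fromBlocks_multiply,
      Matrix.mul_assoc, sub_eq_add_neg, Matrix.neg_mul, Matrix.mul_neg]
  have rhs_eq : (ς : ℚ_[p]) • Jmat g ℚ_[p]
      = Matrix.fromBlocks 0 (-((ς : ℚ_[p]) • E)) ((ς : ℚ_[p]) • E) 0 := by
    simp [Jmat, hE, Matrix.fromBlocks_smul, smul_neg]
  rw [lhs_eq, rhs_eq] at hJ
  have h11 : cᵀ * E * a - aᵀ * E * c = 0 := by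
    have := congrArg Matrix.toBlocks₁₁ hJ
    simpa [Matrix.toBlocks_fromBlocks₁₁] using this
  have h12 : cᵀ * E * b - aᵀ * E * d = -((ς : ℚ_[p]) • E) := by
    have := congrArg Matrix.toBlocks₁₂ hJ
    simpa [Matrix.toBlocks_fromBlocks₁₂] using this
  have h21 : dᵀ * E * a - bᵀ * E * c = (ς : ℚ_[p]) • E := by
    have := congrArg Matrix.toBlocks₂₁ hJ
    simpa [Matrix.toBlocks_fromBlocks₂₁] using this
  have h22 : dᵀ * E * b - bᵀ * E * d = 0 := by
    have := congrArg Matrix.toBlocks₂₂ hJ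
    simpa [Matrix.toBlocks_fromBlocks₂₂] using this
  have h11' : cᵀ * E * a = aᵀ * E * c := sub_eq_zero.mp h11
  have h22' : dᵀ * E * b = bᵀ * E * d := sub_eq_zero.mp h22
  have h12' : aᵀ * E * d = cᵀ * E * b + (ς : ℚ_[p]) • E := by
    have h := h12
    rw [sub_eq_iff_eq_add] at h
    rw [h]; abel
  have h21' : dᵀ * E * a = bᵀ * E * c + (ς : ℚ_[p]) • E := by
    have h := h21
    rw [sub_eq_iff_eq_add] at h
    rw [h]; abel
  -- the symmetry condition for the new pair
  have expand : ∀ x y z w : Matrix (Fin g) (Fin g) ℚ_[p],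
      (x * γ + y * υ)ᵀ * E * (z * γ + w * υ)
        = γᵀ * (xᵀ * E * z) * γ + γᵀ * (xᵀ * E * w) * υ
          + υᵀ * (yᵀ * E * z) * γ + υᵀ * (yᵀ * E * w) * υ := by
    intro x y z w
    simp only [Matrix.transpose_add, Matrix.transpose_mul]
    noncomm_ring
  have hmid : γᵀ * ((ς : ℚ_[p]) • E) * υ = υᵀ * ((ς : ℚ_[p]) • E) * γ := by
    simp only [Matrix.mul_smul, Matrix.smul_mul, hsym]
  have hSymNew : (a * γ + b * υ)ᵀ * E * (c * γ + d * υ)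
      = (c * γ + d * υ)ᵀ * E * (a * γ + b * υ) := by
    rw [expand, expand, h11', h22', h12', h21']
    simp only [Matrix.mul_add, Matrix.add_mul, hmid]
    abel
  refine ⟨⟨⟨hIntNew, hdet, hOffNew⟩, hPNew, hSymNew⟩, ?_⟩
  intro a' b' c' d' _
  constructor <;> noncomm_ring
end

section
/- Let A be a noetherian domain and B a finite flat A-algebra. Suppose M and N are B-modules, finite flat over A, with B-module isomorphisms M ≅ B^∨ and N ≅ B^∨ where B^∨ = Hom_A(B, A), and suppose β : M × N → A is an A-bilinear B-equivariant pairing (β(bm, n) = β(m, bn)). Let β_B denote the base change of β to a B-bilinear pairing (M ⊗_A B) × (N ⊗_A B) → B, and let I = ker(B ⊗_A B → B). Then the ideal of B generated by β_B((M ⊗_A B)[I] × (N ⊗_A B)[I]) is a principal ideal. -/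
open TensorProduct

section

variable (A B M N : Type*) [CommRing A] [CommRing B] [Algebra A B]
  [AddCommGroup M] [Module A M] [Module B M] [IsScalarTower A B M]
  [AddCommGroup N] [Module A N] [Module B N] [IsScalarTower A B N]

/-- Scalar multiplication by `b ∈ B` on a `B`-module, as an `A`-linear map. -/
def smulMap (b : B) : M →ₗ[A] M := (LinearMap.lsmul B M b).restrictScalars A

/-- The `B`-module structure on `M^∨ = Hom_A(M, A)`: `(b • ψ)(m) = ψ(b • m)`. -/
def dualSmulHom (b : B) : Module.Dual A M →ₗ[A] Module.Dual A M :=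
  ((LinearMap.lsmul B M b).restrictScalars A).dualMap

/-- The `I`-torsion subset of `M ⊗_A B`, for `I = ker(B ⊗_A B → B)`: elements killed by
the generators `b' ⊗ 1 − 1 ⊗ b'` of `I` (acting by `b'•` on `M` and by multiplication
on `B`). -/
def torsSet : Set (M ⊗[A] B) :=
  {x | ∀ b' : B, TensorProduct.map (smulMap A B M b') LinearMap.id x
    = TensorProduct.map LinearMap.id (LinearMap.mulLeft A b') x}

/-- The base change `β_B` of an `A`-bilinear pairing `β : M × N → A` to a `B`-bilinear
pairing `(M ⊗_A B) × (N ⊗_A B) → B`, packaged on the tensor product: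
`β_B((m ⊗ b) ⊗ (n ⊗ b')) = β(m, n) • (b b')`. -/
noncomputable def betaB (β : M →ₗ[A] N →ₗ[A] A) :
    (M ⊗[A] B) ⊗[A] (N ⊗[A] B) →ₗ[A] B :=
  (TensorProduct.lid A B).toLinearMap ∘ₗ
    TensorProduct.map (TensorProduct.lift β) (LinearMap.mul' A B) ∘ₗ
    (TensorProduct.tensorTensorTensorComm A M B N B).toLinearMap

end

section AuxProof

variable {A B : Type*} [CommRing A] [CommRing B] [Algebra A B]

private lemma phi_mulright (c : B) (x : Module.Dual A B ⊗[A] B) :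
    dualTensorHom A B B (TensorProduct.map LinearMap.id (LinearMap.mulLeft A c) x)
      = LinearMap.mulLeft A c ∘ₗ dualTensorHom A B B x := by
  induction x using TensorProduct.induction_on with
  | zero => simp
  | tmul ψ b => ext z; simp [mul_smul_comm]
  | add x y hx hy => simp only [map_add, hx, hy, LinearMap.comp_add]

private lemma phi_dualsmul (c : B) (x : Module.Dual A B ⊗[A] B) :
    dualTensorHom A B B (TensorProduct.map (dualSmulHom A B B c) LinearMap.id x)
      = dualTensorHom A B B x ∘ₗ LinearMap.mulLeft A c := by
  induction x using TensorProduct.induction_on with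
  | zero => simp
  | tmul ψ b => ext z; simp [dualSmulHom, smul_eq_mul]
  | add x y hx hy => simp only [map_add, hx, hy, LinearMap.add_comp]

variable {n : ℕ} {ψv : Fin n → Module.Dual A B} {bv : Fin n → B}

private lemma phi_inj (hdb : ∀ x : B, ∑ i, ψv i x • bv i = x) :
    Function.Injective (dualTensorHom A B B) := by
  have key : ∀ x : Module.Dual A B ⊗[A] B,
      (∑ i, ψv i ⊗ₜ[A] (dualTensorHom A B B x) (bv i)) = x := by
    intro x
    induction x using TensorProduct.induction_on with
    | zero => simp
    | tmul ψ b =>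
        have h1 : ∀ i : Fin n, ψv i ⊗ₜ[A] (ψ (bv i) • b) = (ψ (bv i) • ψv i) ⊗ₜ[A] b := by
          intro i; rw [tmul_smul, smul_tmul']
        simp only [dualTensorHom_apply, h1, ← TensorProduct.sum_tmul]
        congr 1
        ext z
        simp only [LinearMap.coe_sum, Finset.sum_apply, LinearMap.smul_apply, smul_eq_mul]
        conv_rhs => rw [← hdb z]
        rw [map_sum]
        simp [mul_comm, smul_eq_mul]
    | add x y hx hy =>
        simp only [map_add, LinearMap.add_apply, tmul_add, Finset.sum_add_distrib, hx, hy]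
  intro x y h
  rw [← key x, ← key y, h]

private lemma phi_x0 (hdb : ∀ x : B, ∑ i, ψv i x • bv i = x) :
    dualTensorHom A B B (∑ i, ψv i ⊗ₜ[A] bv i) = LinearMap.id := by
  ext z; simp [hdb]

private lemma x0_tors (hdb : ∀ x : B, ∑ i, ψv i x • bv i = x) (c : B) :
    TensorProduct.map (dualSmulHom A B B c) LinearMap.id (∑ i, ψv i ⊗ₜ[A] bv i)
      = TensorProduct.map LinearMap.id (LinearMap.mulLeft A c) (∑ i, ψv i ⊗ₜ[A] bv i) := by
  apply phi_inj hdb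
  rw [phi_dualsmul, phi_mulright, phi_x0 hdb, LinearMap.id_comp, LinearMap.comp_id]

private lemma tors_structure (hdb : ∀ x : B, ∑ i, ψv i x • bv i = x)
    (x : Module.Dual A B ⊗[A] B)
    (hx : ∀ c : B, TensorProduct.map (dualSmulHom A B B c) LinearMap.id x
      = TensorProduct.map LinearMap.id (LinearMap.mulLeft A c) x) :
    x = TensorProduct.map LinearMap.id (LinearMap.mulLeft A (dualTensorHom A B B x 1))
        (∑ i, ψv i ⊗ₜ[A] bv i) := by
  apply phi_inj hdb
  rw [phi_mulright, phi_x0 hdb, LinearMap.comp_id]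
  ext z
  have := congrArg (fun f => dualTensorHom A B B f 1) (hx z)
  simp only [phi_dualsmul, phi_mulright, LinearMap.comp_apply, LinearMap.mulLeft_apply,
    mul_one] at this ⊢
  rw [this, mul_comm]

end AuxProof

/-- Bellaïche's principality lemma: for `A` a noetherian domain, `B` a finite flat
`A`-algebra, `M ≅ B^∨ ≅ N` as `B`-modules (finite flat over `A`) and `β : M × N → A`
an `A`-bilinear `B`-equivariant pairing, the ideal of `B` generated by the image of
`β_B` on the `I`-torsion parts `(M ⊗_A B)[I] × (N ⊗_A B)[I]` is principal. -/
theorem L_ideal_principal (A B M N : Type*) [CommRing A] [IsDomain A] [IsNoetherianRing A]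
    [CommRing B] [Algebra A B] [Module.Finite A B] [Module.Flat A B]
    [AddCommGroup M] [Module A M] [Module B M] [IsScalarTower A B M]
    [Module.Finite A M] [Module.Flat A M]
    [AddCommGroup N] [Module A N] [Module B N] [IsScalarTower A B N]
    [Module.Finite A N] [Module.Flat A N]
    (eM : ∃ e : M ≃ₗ[A] Module.Dual A B,
      ∀ (b : B) (m : M), e (b • m) = dualSmulHom A B B b (e m))
    (eN : ∃ e : N ≃ₗ[A] Module.Dual A B,
      ∀ (b : B) (n : N), e (b • n) = dualSmulHom A B B b (e n))
    (β : M →ₗ[A] N →ₗ[A] A)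
    (hβ : ∀ (b : B) (m : M) (n : N), β (b • m) n = β m (b • n)) :
    (Ideal.span {r : B | ∃ x ∈ torsSet A B M, ∃ y ∈ torsSet A B N,
        betaB A B M N β (x ⊗ₜ[A] y) = r}).IsPrincipal := by
  classical
  obtain ⟨e, he⟩ := eM
  obtain ⟨f, hf⟩ := eN
  have hfp : Module.FinitePresentation A B := Module.finitePresentation_of_finite A B
  have hproj : Module.Projective A B :=
    Module.freeLocus_eq_univ_iff.mp Module.freeLocus_eq_univ
  obtain ⟨k, P, Q, -, -, hPQ⟩ := Module.Finite.exists_comp_eq_id_of_projective A B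
  set ψv : Fin k → Module.Dual A B := fun i => (LinearMap.proj i) ∘ₗ Q with hψv
  set bv : Fin k → B := fun i => P (fun j => if i = j then 1 else 0) with hbv
  have hdb : ∀ x : B, ∑ i, ψv i x • bv i = x := by
    intro x
    have h1 : (Q x : Fin k → A) = ∑ i, Q x i • (fun j => if i = j then (1 : A) else 0) :=
      pi_eq_sum_univ (Q x)
    calc ∑ i, ψv i x • bv i
        = P (∑ i, Q x i • (fun j => if i = j then (1 : A) else 0)) := by
          rw [map_sum]; simp [hψv, hbv]
      _ = P (Q x) := by rw [← h1]
      _ = x := by rw [← LinearMap.comp_apply, hPQ]; rfl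
  set x₀ : Module.Dual A B ⊗[A] B := ∑ i, ψv i ⊗ₜ[A] bv i with hx₀
  set E : M ⊗[A] B ≃ₗ[A] Module.Dual A B ⊗[A] B :=
    TensorProduct.congr e (LinearEquiv.refl A B) with hE
  set F : N ⊗[A] B ≃ₗ[A] Module.Dual A B ⊗[A] B :=
    TensorProduct.congr f (LinearEquiv.refl A B) with hF
  -- intertwining lemmas
  have hE1 : ∀ (c : B) (x : M ⊗[A] B),
      E (TensorProduct.map (smulMap A B M c) LinearMap.id x)
        = TensorProduct.map (dualSmulHom A B B c) LinearMap.id (E x) := by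
    intro c x
    have : (E.toLinearMap ∘ₗ TensorProduct.map (smulMap A B M c) LinearMap.id)
        = (TensorProduct.map (dualSmulHom A B B c) LinearMap.id ∘ₗ E.toLinearMap) := by
      ext m b
      simp [hE, smulMap, he c m]
    exact LinearMap.congr_fun this x
  have hF1 : ∀ (c : B) (y : N ⊗[A] B),
      F (TensorProduct.map (smulMap A B N c) LinearMap.id y)
        = TensorProduct.map (dualSmulHom A B B c) LinearMap.id (F y) := by
    intro c y
    have : (F.toLinearMap ∘ₗ TensorProduct.map (smulMap A B N c) LinearMap.id)
        = (TensorProduct.map (dualSmulHom A B B c) LinearMap.id ∘ₗ F.toLinearMap) := by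
      ext nn b
      simp [hF, smulMap, hf c nn]
    exact LinearMap.congr_fun this y
  have hE2 : ∀ (c : B) (x : M ⊗[A] B),
      E (TensorProduct.map LinearMap.id (LinearMap.mulLeft A c) x)
        = TensorProduct.map LinearMap.id (LinearMap.mulLeft A c) (E x) := by
    intro c x
    have : (E.toLinearMap ∘ₗ TensorProduct.map LinearMap.id (LinearMap.mulLeft A c))
        = (TensorProduct.map LinearMap.id (LinearMap.mulLeft A c) ∘ₗ E.toLinearMap) := by
      ext m b; simp [hE]
    exact LinearMap.congr_fun this x
  have hF2 : ∀ (c : B) (y : N ⊗[A] B),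
      F (TensorProduct.map LinearMap.id (LinearMap.mulLeft A c) y)
        = TensorProduct.map LinearMap.id (LinearMap.mulLeft A c) (F y) := by
    intro c y
    have : (F.toLinearMap ∘ₗ TensorProduct.map LinearMap.id (LinearMap.mulLeft A c))
        = (TensorProduct.map LinearMap.id (LinearMap.mulLeft A c) ∘ₗ F.toLinearMap) := by
      ext nn b; simp [hF]
    exact LinearMap.congr_fun this y
  have hE2s : ∀ (c : B) (z : Module.Dual A B ⊗[A] B),
      E.symm (TensorProduct.map LinearMap.id (LinearMap.mulLeft A c) z)
        = TensorProduct.map LinearMap.id (LinearMap.mulLeft A c) (E.symm z) := by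
    intro c z
    apply E.injective
    rw [hE2, E.apply_symm_apply, E.apply_symm_apply]
  have hF2s : ∀ (c : B) (z : Module.Dual A B ⊗[A] B),
      F.symm (TensorProduct.map LinearMap.id (LinearMap.mulLeft A c) z)
        = TensorProduct.map LinearMap.id (LinearMap.mulLeft A c) (F.symm z) := by
    intro c z
    apply F.injective
    rw [hF2, F.apply_symm_apply, F.apply_symm_apply]
  set xM : M ⊗[A] B := E.symm x₀ with hxM
  set yN : N ⊗[A] B := F.symm x₀ with hyN
  have hxMtors : xM ∈ torsSet A B M := by
    intro c
    apply E.injective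
    rw [hE1, hE2, hxM, E.apply_symm_apply, x0_tors hdb]
  have hyNtors : yN ∈ torsSet A B N := by
    intro c
    apply F.injective
    rw [hF1, hF2, hyN, F.apply_symm_apply, x0_tors hdb]
  have htorsM : ∀ x ∈ torsSet A B M,
      ∃ c : B, x = TensorProduct.map LinearMap.id (LinearMap.mulLeft A c) xM := by
    intro x hx
    have hxT : ∀ c : B, TensorProduct.map (dualSmulHom A B B c) LinearMap.id (E x)
        = TensorProduct.map LinearMap.id (LinearMap.mulLeft A c) (E x) := by
      intro c; rw [← hE1, ← hE2, hx c]
    refine ⟨dualTensorHom A B B (E x) 1, ?_⟩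
    have hstr := tors_structure hdb (E x) hxT
    calc x = E.symm (E x) := (E.symm_apply_apply x).symm
      _ = E.symm (TensorProduct.map LinearMap.id
            (LinearMap.mulLeft A (dualTensorHom A B B (E x) 1)) x₀) := by rw [← hstr]
      _ = TensorProduct.map LinearMap.id
            (LinearMap.mulLeft A (dualTensorHom A B B (E x) 1)) xM := hE2s _ _
  have htorsN : ∀ y ∈ torsSet A B N,
      ∃ c : B, y = TensorProduct.map LinearMap.id (LinearMap.mulLeft A c) yN := by
    intro y hy
    have hyT : ∀ c : B, TensorProduct.map (dualSmulHom A B B c) LinearMap.id (F y)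
        = TensorProduct.map LinearMap.id (LinearMap.mulLeft A c) (F y) := by
      intro c; rw [← hF1, ← hF2, hy c]
    refine ⟨dualTensorHom A B B (F y) 1, ?_⟩
    have hstr := tors_structure hdb (F y) hyT
    calc y = F.symm (F y) := (F.symm_apply_apply y).symm
      _ = F.symm (TensorProduct.map LinearMap.id
            (LinearMap.mulLeft A (dualTensorHom A B B (F y) 1)) x₀) := by rw [← hstr]
      _ = TensorProduct.map LinearMap.id
            (LinearMap.mulLeft A (dualTensorHom A B B (F y) 1)) yN := hF2s _ _
  -- the pairing computation
  have hbeta_tmul : ∀ (m : M) (b : B) (nn : N) (b' : B),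
      betaB A B M N β ((m ⊗ₜ[A] b) ⊗ₜ[A] (nn ⊗ₜ[A] b')) = β m nn • (b * b') := by
    intro m b nn b'
    simp [betaB]
  have hbeta : ∀ (c c' : B) (x : M ⊗[A] B) (y : N ⊗[A] B),
      betaB A B M N β ((TensorProduct.map LinearMap.id (LinearMap.mulLeft A c) x)
          ⊗ₜ[A] (TensorProduct.map LinearMap.id (LinearMap.mulLeft A c') y))
        = (c * c') * betaB A B M N β (x ⊗ₜ[A] y) := by
    intro c c' x y
    induction x using TensorProduct.induction_on with
    | zero => simp
    | tmul m b =>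
      induction y using TensorProduct.induction_on with
      | zero => simp
      | tmul nn b' =>
        simp only [TensorProduct.map_tmul, LinearMap.id_coe, id_eq,
          LinearMap.mulLeft_apply, hbeta_tmul]
        rw [mul_smul_comm]
        ring_nf
      | add y1 y2 h1 h2 =>
        simp only [map_add, tmul_add, h1, h2, mul_add]
    | add x1 x2 h1 h2 =>
      simp only [map_add, add_tmul, h1, h2, mul_add]
  set g : B := betaB A B M N β (xM ⊗ₜ[A] yN) with hg
  refine ⟨⟨g, ?_⟩⟩
  apply le_antisymm
  · rw [Ideal.span_le]
    rintro r ⟨x, hx, y, hy, rfl⟩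
    obtain ⟨c, rfl⟩ := htorsM x hx
    obtain ⟨c', rfl⟩ := htorsN y hy
    rw [hbeta]
    exact Ideal.mem_span_singleton.mpr (dvd_mul_left g (c * c'))
  · exact (Ideal.span_singleton_le_iff_mem _).mpr
      (Ideal.subset_span ⟨xM, hxMtors, yN, hyNtors, rfl⟩)
end
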